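/- Let A be the adjacency matrix of a signed graph of order n, let X = (x₁,…,xₙ) be an eigenvector of A for the eigenvalue λ₁(A), and let r ≠ s be vertices with x_r * x_s ≥ 0 and not both x_r and x_s zero. Suppose A r s ∈ {−1, 0}, and let B be the matrix agreeing with A in all entries except B r s = B s r = c, where c ∈ {0, 1} and c > A r s. Then λ₁(B) > λ₁(A). -/

import Mathlib

open Matrix

/-- The largest eigenvalue of a real matrix (for symmetric matrices this is λ₁). -/
noncomputable def lam1 {n : ℕ} (A : Matrix (Fin n) (Fin n) ℝ) : ℝ :=
  sSup {μ : ℝ | ∃ v : Fin n → ℝ, v ≠ 0 ∧ A.mulVec v = μ • v}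

/-- `A` is the adjacency matrix of a signed graph: symmetric, zero diagonal,
entries in {-1,0,1}. -/
def IsSignedAdj {n : ℕ} (A : Matrix (Fin n) (Fin n) ℝ) : Prop :=
  A.IsSymm ∧ (∀ i, A i i = 0) ∧ ∀ i j, A i j = -1 ∨ A i j = 0 ∨ A i j = 1

/-- A signed graph is balanced if a global sign switching makes all edges positive. -/
def IsBalanced {n : ℕ} (A : Matrix (Fin n) (Fin n) ℝ) : Prop :=
  ∃ s : Fin n → ℝ, (∀ i, s i = -1 ∨ s i = 1) ∧ ∀ i j, 0 ≤ s i * A i j * s j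

/-- Every fully present copy of K_{3,3} is balanced. -/
def K33Free {n : ℕ} (A : Matrix (Fin n) (Fin n) ℝ) : Prop :=
  ∀ a₁ a₂ a₃ b₁ b₂ b₃ : Fin n,
    [a₁, a₂, a₃, b₁, b₂, b₃].Nodup →
    (∀ a ∈ [a₁, a₂, a₃], ∀ b ∈ [b₁, b₂, b₃], A a b ≠ 0) →
    ∀ a ∈ [a₁, a₂, a₃], ∀ a' ∈ [a₁, a₂, a₃], ∀ b ∈ [b₁, b₂, b₃], ∀ b' ∈ [b₁, b₂, b₃],
      A a b * A a b' * A a' b * A a' b' = 1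

/-- Switching isomorphism of signed adjacency matrices. -/
def SwitchIso {n : ℕ} (A B : Matrix (Fin n) (Fin n) ℝ) : Prop :=
  ∃ σ : Equiv.Perm (Fin n), ∃ s : Fin n → ℝ, (∀ i, s i = -1 ∨ s i = 1) ∧
    ∀ i j, B i j = s i * s j * A (σ i) (σ j)

/-- Adjacency matrix of Γ_{n,t}: vertex 0 is u, vertices 1,…,n-1 form an
all-positive K_{n-1}; u is adjacent to 1,…,t-1, with u1 the unique negative edge. -/
noncomputable def Mnt (n t : ℕ) : Matrix (Fin n) (Fin n) ℝ :=
  Matrix.of fun i j =>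
    if i = j then 0
    else if (i : ℕ) = 0 then (if (j : ℕ) = 1 then -1 else if (j : ℕ) < t then 1 else 0)
    else if (j : ℕ) = 0 then (if (i : ℕ) = 1 then -1 else if (i : ℕ) < t then 1 else 0)
    else 1

lemma aux_herm {n : ℕ} {M : Matrix (Fin n) (Fin n) ℝ} (h : M.IsSymm) : M.IsHermitian := by
  ext i j
  rw [Matrix.conjTranspose_apply, star_trivial, h.apply]

lemma aux_dot_symm {n : ℕ} {M : Matrix (Fin n) (Fin n) ℝ} (h : M.IsSymm) (u v : Fin n → ℝ) :
    u ⬝ᵥ M.mulVec v = M.mulVec u ⬝ᵥ v := by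
  rw [Matrix.dotProduct_mulVec, ← Matrix.mulVec_transpose, h.eq]

lemma aux_dot_pos {n : ℕ} {v : Fin n → ℝ} (hv : v ≠ 0) : 0 < v ⬝ᵥ v := by
  rcases lt_or_eq_of_le (Finset.sum_nonneg fun i _ => mul_self_nonneg (v i) :
      (0:ℝ) ≤ v ⬝ᵥ v) with h | h
  · exact h
  · exact absurd (dotProduct_self_eq_zero.mp h.symm) hv

lemma aux_rayleigh {n : ℕ} (hn : 0 < n) {M : Matrix (Fin n) (Fin n) ℝ} (hM : M.IsSymm)
    (v : Fin n → ℝ) : v ⬝ᵥ M.mulVec v ≤ lam1 M * (v ⬝ᵥ v) := by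
  haveI : Nonempty (Fin n) := ⟨⟨0, hn⟩⟩
  have hH : M.IsHermitian := aux_herm hM
  set b := hH.eigenvectorBasis with hb
  set e := hH.eigenvalues with he
  obtain ⟨i₀, -, hi₀⟩ := Finset.exists_mem_eq_sup' Finset.univ_nonempty e
  set μ := Finset.univ.sup' Finset.univ_nonempty e with hμ
  have inner_eq : ∀ u w : EuclideanSpace ℝ (Fin n),
      (inner ℝ u w : ℝ) = (u : Fin n → ℝ) ⬝ᵥ (w : Fin n → ℝ) := by
    intro u w
    simp [PiLp.inner_apply, RCLike.inner_apply, dotProduct, mul_comm]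
  have qform : ∀ w : Fin n → ℝ, w ⬝ᵥ M.mulVec w ≤ μ * (w ⬝ᵥ w) := by
    intro w
    have h1 : ∀ i : Fin n,
        ((b i : Fin n → ℝ) ⬝ᵥ M.mulVec w) = e i * ((w : Fin n → ℝ) ⬝ᵥ (b i : Fin n → ℝ)) := by
      intro i
      have hbv : M *ᵥ (b i : Fin n → ℝ) = e i • (b i : Fin n → ℝ) :=
        hH.mulVec_eigenvectorBasis i
      rw [aux_dot_symm hM, hbv, smul_dotProduct,
        dotProduct_comm]
      rfl
    have key : w ⬝ᵥ M.mulVec w = ∑ i, e i * ((w ⬝ᵥ (b i : Fin n → ℝ)) * (w ⬝ᵥ (b i : Fin n → ℝ))) := by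
      have := b.sum_inner_mul_inner (WithLp.toLp 2 w : EuclideanSpace ℝ (Fin n))
        (WithLp.toLp 2 (M.mulVec w) : EuclideanSpace ℝ (Fin n))
      rw [inner_eq] at this
      simp only [WithLp.ofLp_toLp] at this
      rw [← this]
      refine Finset.sum_congr rfl fun i _ => ?_
      rw [inner_eq, inner_eq]
      simp only [WithLp.ofLp_toLp]
      rw [h1 i]
      ring
    have key2 : w ⬝ᵥ w = ∑ i, (w ⬝ᵥ (b i : Fin n → ℝ)) * (w ⬝ᵥ (b i : Fin n → ℝ)) := by
      have := b.sum_inner_mul_inner (WithLp.toLp 2 w : EuclideanSpace ℝ (Fin n)) (WithLp.toLp 2 w : EuclideanSpace ℝ (Fin n))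
      rw [inner_eq] at this
      simp only [WithLp.ofLp_toLp] at this
      rw [← this]
      refine Finset.sum_congr rfl fun i _ => ?_
      rw [inner_eq, inner_eq]
      simp only [WithLp.ofLp_toLp]
      rw [dotProduct_comm (b i : Fin n → ℝ) w]
    rw [key, key2, Finset.mul_sum]
    refine Finset.sum_le_sum fun i _ => ?_
    exact mul_le_mul_of_nonneg_right (Finset.le_sup' e (Finset.mem_univ i)) (mul_self_nonneg _)
  have hmem : μ ∈ {μ : ℝ | ∃ v : Fin n → ℝ, v ≠ 0 ∧ M.mulVec v = μ • v} := by
    refine ⟨(b i₀ : Fin n → ℝ), ?_, ?_⟩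
    · intro h0
      exact b.orthonormal.ne_zero i₀ (by ext j; exact congrFun h0 j)
    · have hbv : M *ᵥ (b i₀ : Fin n → ℝ) = e i₀ • (b i₀ : Fin n → ℝ) :=
        hH.mulVec_eigenvectorBasis i₀
      rw [hbv, hi₀]
  have hub : ∀ μ' ∈ {μ : ℝ | ∃ v : Fin n → ℝ, v ≠ 0 ∧ M.mulVec v = μ • v}, μ' ≤ μ := by
    rintro μ' ⟨u, hu0, hu⟩
    have h1 := qform u
    rw [hu, dotProduct_smul, smul_eq_mul] at h1
    exact le_of_mul_le_mul_right h1 (aux_dot_pos hu0)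
  have hl : lam1 M = μ := IsGreatest.csSup_eq ⟨hmem, hub⟩
  rw [hl]
  exact qform v

lemma aux_quad {n : ℕ} {A : Matrix (Fin n) (Fin n) ℝ} (hAs : A.IsSymm)
    {r s : Fin n} (hrs : r ≠ s) (c : ℝ) (y : Fin n → ℝ) :
    y ⬝ᵥ (Matrix.of fun i j =>
        if (i = r ∧ j = s) ∨ (i = s ∧ j = r) then c else A i j).mulVec y
      = y ⬝ᵥ A.mulVec y + 2 * (c - A r s) * (y r * y s) := by
  set B := (Matrix.of fun i j =>
      if (i = r ∧ j = s) ∨ (i = s ∧ j = r) then c else A i j) with hB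
  have hasr : A s r = A r s := (hAs.apply s r).symm
  have hBA : ∀ i j, B i j = A i j +
      ((if i = r ∧ j = s then c - A r s else 0) + (if i = s ∧ j = r then c - A r s else 0)) := by
    intro i j
    rw [hB]
    simp only [Matrix.of_apply]
    by_cases h1 : i = r ∧ j = s
    · have h2 : ¬(i = s ∧ j = r) := fun h => hrs (h1.1.symm.trans h.1)
      rw [if_pos (Or.inl h1), if_pos h1, if_neg h2, h1.1, h1.2]
      ring
    · by_cases h2 : i = s ∧ j = r
      · rw [if_pos (Or.inr h2), if_neg h1, if_pos h2, h2.1, h2.2, hasr]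
        ring
      · rw [if_neg (by tauto : ¬((i = r ∧ j = s) ∨ (i = s ∧ j = r))), if_neg h1, if_neg h2]
        ring
  have hmv : ∀ i, B.mulVec y i = A.mulVec y i +
      ((if i = r then (c - A r s) * y s else 0) + (if i = s then (c - A r s) * y r else 0)) := by
    intro i
    simp only [Matrix.mulVec, dotProduct, hBA, add_mul]
    rw [Finset.sum_add_distrib, Finset.sum_add_distrib]
    congr 1
    congr 1
    · rcases eq_or_ne i r with hir | hir
      · subst hir
        rw [Finset.sum_eq_single s]
        · simp
        · intro j _ hj; simp [hj]
        · simp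
      · rw [Finset.sum_eq_zero]
        · simp [hir]
        · intro j _; simp [hir]
    · rcases eq_or_ne i s with his | his
      · subst his
        rw [Finset.sum_eq_single r]
        · simp
        · intro j _ hj; simp [hj]
        · simp
      · rw [Finset.sum_eq_zero]
        · simp [his]
        · intro j _; simp [his]
  simp only [dotProduct, hmv, mul_add]
  rw [Finset.sum_add_distrib, Finset.sum_add_distrib]
  have e1 : ∑ i, y i * (if i = r then (c - A r s) * y s else 0) = y r * ((c - A r s) * y s) := by
    rw [Finset.sum_eq_single r]
    · simp
    · intro j _ hj; simp [hj]
    · simp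
  have e2 : ∑ i, y i * (if i = s then (c - A r s) * y r else 0) = y s * ((c - A r s) * y r) := by
    rw [Finset.sum_eq_single s]
    · simp
    · intro j _ hj; simp [hj]
    · simp
  rw [e1, e2]
  ring

theorem lam1_lt_of_edge_improvement' (n : ℕ) (A : Matrix (Fin n) (Fin n) ℝ)
    (hAsymm : A.IsSymm) (hdiag : ∀ i, A i i = 0) (x : Fin n → ℝ) (hx : x ≠ 0)
    (hev : A.mulVec x = lam1 A • x)
    (r s : Fin n) (hrs : r ≠ s) (hsign : x r * x s ≥ 0)
    (hnz : ¬ (x r = 0 ∧ x s = 0))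
    (c : ℝ) (hlt : A r s < c) :
    lam1 A <
      lam1 (Matrix.of fun i j =>
        if (i = r ∧ j = s) ∨ (i = s ∧ j = r) then c else A i j) := by
  set B := (Matrix.of fun i j =>
      if (i = r ∧ j = s) ∨ (i = s ∧ j = r) then c else A i j) with hB
  have hn : 0 < n := r.pos
  have δpos : 0 < c - A r s := sub_pos.mpr hlt
  have hBsymm : B.IsSymm := by
    ext i j
    rw [Matrix.transpose_apply, hB]
    simp only [Matrix.of_apply]
    have : ((j = r ∧ i = s) ∨ (j = s ∧ i = r)) ↔ ((i = r ∧ j = s) ∨ (i = s ∧ j = r)) := by tauto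
    rw [if_congr this rfl rfl]
    split_ifs with h
    · rfl
    · exact hAsymm.apply i j
  have hquad : ∀ y : Fin n → ℝ,
      y ⬝ᵥ B.mulVec y = y ⬝ᵥ A.mulVec y + 2 * (c - A r s) * (y r * y s) :=
    aux_quad hAsymm hrs c
  have hxx : 0 < x ⬝ᵥ x := aux_dot_pos hx
  have hxA : x ⬝ᵥ A.mulVec x = lam1 A * (x ⬝ᵥ x) := by
    rw [hev, dotProduct_smul, smul_eq_mul]
  suffices h : ∃ y : Fin n → ℝ, 0 < y ⬝ᵥ y ∧ lam1 A * (y ⬝ᵥ y) < y ⬝ᵥ B.mulVec y by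
    obtain ⟨y, hy0, hy⟩ := h
    exact lt_of_mul_lt_mul_right (hy.trans_le (aux_rayleigh hn hBsymm y)) hy0.le
  rcases eq_or_lt_of_le (hsign : (0:ℝ) ≤ x r * x s) with h0 | hpos
  · -- one of x r, x s is zero
    obtain ⟨p, q, hpq, hxp, hxq⟩ :
        ∃ p q : Fin n, ((p = r ∧ q = s) ∨ (p = s ∧ q = r)) ∧ x p ≠ 0 ∧ x q = 0 := by
      rcases mul_eq_zero.mp h0.symm with hr0 | hs0
      · exact ⟨s, r, Or.inr ⟨rfl, rfl⟩, fun h => hnz ⟨hr0, h⟩, hr0⟩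
      · exact ⟨r, s, Or.inl ⟨rfl, rfl⟩, fun h => hnz ⟨h, hs0⟩, hs0⟩
    have hqp : q ≠ p := by
      rcases hpq with ⟨h1, h2⟩ | ⟨h1, h2⟩
      · rw [h1, h2]; exact hrs.symm
      · rw [h1, h2]; exact hrs
    set t := (c - A r s) / (|lam1 A| + 1) with ht
    have habs : (0:ℝ) < |lam1 A| + 1 := by positivity
    have htpos : 0 < t := div_pos δpos habs
    set ε := t * x p with hε
    set y : Fin n → ℝ := x + ε • (Pi.single q (1:ℝ) : Fin n → ℝ) with hy
    have hyq : y q = ε := by simp [hy, hxq]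
    have hyp : y p = x p := by simp [hy, Pi.single_eq_of_ne hqp.symm]
    have edot : ∀ v : Fin n → ℝ, Pi.single q (1:ℝ) ⬝ᵥ v = v q := by
      intro v; rw [single_dotProduct, one_mul]
    have dote : ∀ v : Fin n → ℝ, v ⬝ᵥ Pi.single q (1:ℝ) = v q := by
      intro v; rw [dotProduct_single, mul_one]
    have hyy : y ⬝ᵥ y = x ⬝ᵥ x + ε * ε := by
      rw [hy]
      simp only [add_dotProduct, dotProduct_add, smul_dotProduct,
        dotProduct_smul, smul_eq_mul, edot, dote, Pi.add_apply, Pi.smul_apply,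
        Pi.single_eq_same, hxq, mul_zero, zero_add, add_zero, mul_one]
    have hyA : y ⬝ᵥ A.mulVec y = lam1 A * (x ⬝ᵥ x) := by
      rw [hy, Matrix.mulVec_add, Matrix.mulVec_smul]
      simp only [add_dotProduct, dotProduct_add, smul_dotProduct,
        dotProduct_smul, smul_eq_mul]
      have h1 : x ⬝ᵥ A.mulVec (Pi.single q 1) = 0 := by
        rw [aux_dot_symm hAsymm, hev, dote, Pi.smul_apply, smul_eq_mul, hxq, mul_zero]
      have h2 : Pi.single q (1:ℝ) ⬝ᵥ A.mulVec x = 0 := by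
        rw [hev, edot, Pi.smul_apply, smul_eq_mul, hxq, mul_zero]
      have h3 : Pi.single q (1:ℝ) ⬝ᵥ A.mulVec (Pi.single q 1) = 0 := by
        rw [edot, Matrix.mulVec_single]
        simp [hdiag q]
      rw [h1, h2, h3, hxA]
      ring
    have hyrs : y r * y s = x p * ε := by
      rcases hpq with ⟨h1, h2⟩ | ⟨h1, h2⟩
      · rw [← h1, ← h2, hyp, hyq]
      · rw [← h1, ← h2, hyp, hyq]; ring
    refine ⟨y, ?_, ?_⟩
    · rw [hyy]; nlinarith [mul_self_nonneg ε]
    · rw [hquad, hyA, hyy, hyrs]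
      have hxp2 : 0 < x p * x p := mul_self_pos.mpr hxp
      have hlamt : lam1 A * t < 2 * (c - A r s) := by
        have h1 : lam1 A * t ≤ |lam1 A| * t :=
          mul_le_mul_of_nonneg_right (le_abs_self _) htpos.le
        have h2 : |lam1 A| * t < (|lam1 A| + 1) * t := by nlinarith
        have h3 : (|lam1 A| + 1) * t = c - A r s := by
          rw [ht]; field_simp
        linarith
      rw [hε]
      nlinarith [mul_pos htpos hxp2]
  · exact ⟨x, hxx, by rw [hquad, hxA]; nlinarith [mul_pos δpos hpos]⟩

theorem lam1_lt_of_edge_improvement (n : ℕ) (A : Matrix (Fin n) (Fin n) ℝ)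
    (hA : IsSignedAdj A) (x : Fin n → ℝ) (hx : x ≠ 0)
    (hev : A.mulVec x = lam1 A • x)
    (r s : Fin n) (hrs : r ≠ s) (hsign : x r * x s ≥ 0)
    (hnz : ¬ (x r = 0 ∧ x s = 0))
    (hArs : A r s = -1 ∨ A r s = 0) (c : ℝ) (hc : c = 0 ∨ c = 1) (hlt : A r s < c) :
    lam1 A <
      lam1 (Matrix.of fun i j =>
        if (i = r ∧ j = s) ∨ (i = s ∧ j = r) then c else A i j) := by
  obtain ⟨hAsymm, hdiag, -⟩ := hA
  exact lam1_lt_of_edge_improvement' n A hAsymm hdiag x hx hev r s hrs hsign hnz c hlt
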